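/- Suppose each f_j is σ-strongly convex (σ > 0) and each ∇f_j is Lipschitz continuous with constant L, d(x) is the unique global minimizer of d ↦ Q(x,d), and t(x) = Q(x,d(x)). Let β ∈ (0,1). Then for every α ∈ (0,1] with α ≤ σ(1−β)/L and every j = 1,…,m, F_j(x + α d(x)) ≤ F_j(x) + β α t(x). In particular, backtracking over {1, r, r², …} with r ∈ (0,1) accepts a step length α_k ≥ min{1, σ(1−β)r/L}. -/

import Mathlib

open Filter Topology Finset
open scoped RealInnerProductSpace

noncomputable section

/-- One-sided directional derivative: `c = F'(x; d) = lim_{α→0⁺} (F(x+αd) − F(x))/α`. -/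
def HasDirDeriv {n : ℕ} (F : EuclideanSpace ℝ (Fin n) → ℝ)
    (x d : EuclideanSpace ℝ (Fin n)) (c : ℝ) : Prop :=
  Filter.Tendsto (fun α : ℝ => (F (x + α • d) - F x) / α) (nhdsWithin 0 (Set.Ioi 0)) (nhds c)

/-- Subdifferential of a convex function: `∂h(x) = {ξ : h(y) ≥ h(x) + ⟪ξ, y − x⟫ ∀ y}`. -/
def subdiff {n : ℕ} (h : EuclideanSpace ℝ (Fin n) → ℝ) (x : EuclideanSpace ℝ (Fin n)) :
    Set (EuclideanSpace ℝ (Fin n)) :=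
  {ξ | ∀ y, h x + ⟪ξ, y - x⟫ ≤ h y}

/-- `σ`-strong convexity: `f(αx+(1−α)y) ≤ αf(x)+(1−α)f(y) − (σ/2)α(1−α)‖x−y‖²`. -/
def StronglyConvexFun {n : ℕ} (σ : ℝ) (f : EuclideanSpace ℝ (Fin n) → ℝ) : Prop :=
  ∀ x y : EuclideanSpace ℝ (Fin n), ∀ α : ℝ, 0 ≤ α → α ≤ 1 →
    f (α • x + (1 - α) • y) ≤ α * f x + (1 - α) * f y - σ / 2 * α * (1 - α) * ‖x - y‖ ^ 2

/-- `Q_j(x,d) = ∇f_j(x)ᵀd + ½ dᵀ∇²f_j(x)d + g_j(x+d) − g_j(x)`, where the Hessian is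
the Fréchet derivative of the gradient. -/
def Qj {n m : ℕ} (f g : Fin (m + 1) → EuclideanSpace ℝ (Fin n) → ℝ)
    (j : Fin (m + 1)) (x d : EuclideanSpace ℝ (Fin n)) : ℝ :=
  ⟪gradient (f j) x, d⟫ + (1 / 2) * ⟪(fderiv ℝ (gradient (f j)) x) d, d⟫
    + g j (x + d) - g j x

/-- `Q(x,d) = max_{1 ≤ j ≤ m} Q_j(x,d)`. -/
def Qmax {n m : ℕ} (f g : Fin (m + 1) → EuclideanSpace ℝ (Fin n) → ℝ)
    (x d : EuclideanSpace ℝ (Fin n)) : ℝ :=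
  Finset.univ.sup' Finset.univ_nonempty (fun j => Qj f g j x d)

variable {n : ℕ}
local notation "E" => EuclideanSpace ℝ (Fin n)

lemma inner_gradient (f : E → ℝ) (y v : E) : ⟪gradient f y, v⟫ = fderiv ℝ f y v := by
  rw [gradient, ← InnerProductSpace.toDual_apply_apply, LinearIsometryEquiv.apply_symm_apply]

lemma hasDerivAt_line (f : E → ℝ) (x v : E) (t : ℝ)
    (hd : DifferentiableAt ℝ f (x + t • v)) :
    HasDerivAt (fun s : ℝ => f (x + s • v)) ⟪gradient f (x + t • v), v⟫ t := by
  have hline : HasDerivAt (fun s : ℝ => x + s • v) v t := by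
    simpa using ((hasDerivAt_id t).smul_const v).const_add x
  have := hd.hasFDerivAt.comp_hasDerivAt t hline
  rwa [← inner_gradient] at this

lemma sc_first_order {σ : ℝ} (f : E → ℝ) (hf : StronglyConvexFun σ f)
    (hd : Differentiable ℝ f) (z y : E) :
    f z + ⟪gradient f z, y - z⟫ + σ / 2 * ‖y - z‖ ^ 2 ≤ f y := by
  set v := y - z with hv
  have hder : HasDerivAt (fun s : ℝ => f (z + s • v)) ⟪gradient f z, v⟫ 0 := by
    have := hasDerivAt_line f z v 0 (hd _)
    simpa using this
  have hslope : Tendsto (fun α : ℝ => (f (z + α • v) - f z) / α) (𝓝[>] (0:ℝ))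
      (𝓝 ⟪gradient f z, v⟫) := by
    have := hasDerivAt_iff_tendsto_slope.1 hder
    have h2 := this.mono_left (nhdsWithin_mono 0 (by intro a ha; exact ne_of_gt ha))
    refine h2.congr' ?_
    filter_upwards [self_mem_nhdsWithin] with a (ha : (0:ℝ) < a)
    simp [slope_def_field, sub_zero]
  have hrhs : Tendsto (fun α : ℝ => f y - f z - σ / 2 * (1 - α) * ‖v‖ ^ 2) (𝓝[>] (0:ℝ))
      (𝓝 (f y - f z - σ / 2 * ‖v‖ ^ 2)) := by
    have : ContinuousAt (fun α : ℝ => f y - f z - σ / 2 * (1 - α) * ‖v‖ ^ 2) 0 := by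
      fun_prop
    simpa using this.continuousWithinAt.tendsto
  have key : ⟪gradient f z, v⟫ ≤ f y - f z - σ / 2 * ‖v‖ ^ 2 := by
    refine le_of_tendsto_of_tendsto hslope hrhs ?_
    filter_upwards [Ioc_mem_nhdsGT_of_mem (by simp : (0:ℝ) ∈ Set.Ico 0 1)] with α hα
    obtain ⟨hα0, hα1⟩ := hα
    have hsc := hf y z α hα0.le hα1
    have hcomb : α • y + (1 - α) • z = z + α • v := by
      rw [hv]; module
    rw [hcomb] at hsc
    rw [div_le_iff₀ hα0]
    nlinarith [hsc]
  linarith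

lemma sc_grad_mono {σ : ℝ} (f : E → ℝ) (hf : StronglyConvexFun σ f)
    (hd : Differentiable ℝ f) (z y : E) :
    σ * ‖y - z‖ ^ 2 ≤ ⟪gradient f y - gradient f z, y - z⟫ := by
  have h1 := sc_first_order f hf hd z y
  have h2 := sc_first_order f hf hd y z
  have e1 : ⟪gradient f y, z - y⟫ = - ⟪gradient f y, y - z⟫ := by
    rw [← inner_neg_right]; congr 1; abel
  have e2 : ‖z - y‖ = ‖y - z‖ := norm_sub_rev z y
  rw [inner_sub_left]
  rw [e1, e2] at h2
  linarith

lemma gradient_contDiff {f : E → ℝ} (hf : ContDiff ℝ 2 f) :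
    ContDiff ℝ 1 (gradient f) := by
  have h1 : ContDiff ℝ 1 (fderiv ℝ f) := hf.fderiv_right (by norm_num)
  exact ((InnerProductSpace.toDual ℝ E).symm.toContinuousLinearEquiv.contDiff).comp h1

lemma hessian_lower {σ : ℝ} (f : E → ℝ) (hf : ContDiff ℝ 2 f)
    (hsc : StronglyConvexFun σ f) (x d : E) :
    σ * ‖d‖ ^ 2 ≤ ⟪(fderiv ℝ (gradient f) x) d, d⟫ := by
  have hd : Differentiable ℝ f := hf.differentiable (by norm_num)
  have hgd : DifferentiableAt ℝ (gradient f) x :=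
    ((gradient_contDiff hf).differentiable (by norm_num)) x
  set H := fderiv ℝ (gradient f) x with hH
  have hline : HasDerivAt (fun s : ℝ => x + s • d) d 0 := by
    simpa using ((hasDerivAt_id (0:ℝ)).smul_const d).const_add x
  have hx0 : x + (0:ℝ) • d = x := by simp
  have hgd' : HasFDerivAt (gradient f) H (x + (0:ℝ) • d) := by rw [hx0]; exact hgd.hasFDerivAt
  have hφ : HasDerivAt (fun s : ℝ => gradient f (x + s • d)) (H d) 0 :=
    by have := hgd'.comp_hasDerivAt 0 hline; exact this
  have hslope : Tendsto (fun s : ℝ => ⟪s⁻¹ • (gradient f (x + s • d) - gradient f x), d⟫)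
      (𝓝[>] (0:ℝ)) (𝓝 ⟪H d, d⟫) := by
    have h1 := hasDerivAt_iff_tendsto_slope.1 hφ
    have h3 : Tendsto (fun s : ℝ => slope (fun s : ℝ => gradient f (x + s • d)) 0 s)
        (𝓝[>] (0:ℝ)) (𝓝 (H d)) :=
      h1.mono_left (nhdsWithin_mono 0 (fun a ha => ne_of_gt ha))
    have h4 := Filter.Tendsto.inner (𝕜 := ℝ) h3 (tendsto_const_nhds : Tendsto (fun _ : ℝ => d) (𝓝[>] (0:ℝ)) (𝓝 d))
    refine h4.congr fun s => ?_
    simp [slope, vsub_eq_sub, hx0]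
  refine ge_of_tendsto hslope ?_
  filter_upwards [self_mem_nhdsWithin] with s (hs : (0:ℝ) < s)
  have hm := sc_grad_mono f hsc hd x (x + s • d)
  have hy : x + s • d - x = s • d := by abel
  rw [hy, real_inner_smul_right, norm_smul, Real.norm_eq_abs, abs_of_pos hs] at hm
  rw [real_inner_smul_left, le_inv_mul_iff₀ hs]
  nlinarith [hm, hs]

lemma descent_lemma {L : ℝ} (hL : 0 < L) (f : E → ℝ) (hd : Differentiable ℝ f)
    (hLip : ∀ y z : E, ‖gradient f y - gradient f z‖ ≤ L * ‖y - z‖) (x v : E) :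
    f (x + v) ≤ f x + ⟪gradient f x, v⟫ + L / 2 * ‖v‖ ^ 2 := by
  set ψ : ℝ → ℝ := fun t => f (x + t • v) - t * ⟪gradient f x, v⟫ - L * t ^ 2 / 2 * ‖v‖ ^ 2
    with hψ
  have hder : ∀ t : ℝ, HasDerivAt ψ
      (⟪gradient f (x + t • v), v⟫ - ⟪gradient f x, v⟫ - L * t * ‖v‖ ^ 2) t := by
    intro t
    have h1 := hasDerivAt_line f x v t (hd _)
    have h2 : HasDerivAt (fun t : ℝ => t * ⟪gradient f x, v⟫) ⟪gradient f x, v⟫ t := by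
      simpa using (hasDerivAt_id t).mul_const ⟪gradient f x, v⟫
    have h3 : HasDerivAt (fun t : ℝ => L * t ^ 2 / 2 * ‖v‖ ^ 2) (L * t * ‖v‖ ^ 2) t := by
      have := ((hasDerivAt_pow 2 t).const_mul L).div_const 2 |>.mul_const (‖v‖ ^ 2)
      exact this.congr_deriv (by rw [show (2:ℕ) - 1 = 1 from rfl]; ring)
    exact (h1.sub h2).sub h3
  have hanti : AntitoneOn ψ (Set.Icc 0 1) := by
    refine antitoneOn_of_deriv_nonpos (convex_Icc 0 1) ?_ ?_ ?_
    · exact fun t _ => ((hder t).continuousAt).continuousWithinAt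
    · intro t ht
      exact ((hder t).differentiableAt).differentiableWithinAt
    · intro t ht
      rw [interior_Icc] at ht
      rw [(hder t).deriv]
      have hb : ⟪gradient f (x + t • v) - gradient f x, v⟫
          ≤ L * t * ‖v‖ ^ 2 := by
        calc ⟪gradient f (x + t • v) - gradient f x, v⟫
            ≤ ‖gradient f (x + t • v) - gradient f x‖ * ‖v‖ := real_inner_le_norm _ _
          _ ≤ (L * ‖x + t • v - x‖) * ‖v‖ := by
              have := hLip (x + t • v) x
              exact mul_le_mul_of_nonneg_right this (norm_nonneg v)
          _ = L * t * ‖v‖ ^ 2 := by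
              have : x + t • v - x = t • v := by abel
              rw [this, norm_smul, Real.norm_eq_abs, abs_of_pos ht.1]
              ring
      rw [inner_sub_left] at hb
      linarith
  have h01 := hanti (Set.left_mem_Icc.2 zero_le_one) (Set.right_mem_Icc.2 zero_le_one)
    zero_le_one
  have e0 : ψ 0 = f x := by
    simp only [hψ, zero_smul, add_zero, zero_mul, sub_zero, ne_eq, OfNat.ofNat_ne_zero,
      not_false_eq_true, zero_pow, mul_zero, zero_div]
  have e1 : ψ 1 = f (x + v) - ⟪gradient f x, v⟫ - L / 2 * ‖v‖ ^ 2 := by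
    simp only [hψ, one_smul, one_pow, one_mul, mul_one]
  rw [e0, e1] at h01
  linarith

/-- with each `f_j` `σ`-strongly convex and `∇f_j` `L`-Lipschitz, `d(x)` the
unique global minimizer of `d ↦ Q(x,d)`, `t(x) = Q(x,d(x))` and `β ∈ (0,1)`: every step
length `α ∈ (0,1]` with `α ≤ σ(1−β)/L` satisfies the Armijo condition
`F_j(x + α d(x)) ≤ F_j(x) + β α t(x)` for all `j` (with `F_j = f_j + g_j`); in particular,
backtracking over `{1, r, r², …}` with `r ∈ (0,1)` accepts a step length

`α_k = r^k ≥ min {1, σ(1−β)r/L}`. -/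
theorem armijo_step_length_bound {n m : ℕ} (σ L : ℝ) (hσ : 0 < σ) (hL : 0 < L)
    (f g : Fin (m + 1) → EuclideanSpace ℝ (Fin n) → ℝ)
    (hfsc : ∀ j, StronglyConvexFun σ (f j))
    (hfC2 : ∀ j, ContDiff ℝ 2 (f j))
    (hLip : ∀ j (y z : EuclideanSpace ℝ (Fin n)),
      ‖gradient (f j) y - gradient (f j) z‖ ≤ L * ‖y - z‖)
    (hgconv : ∀ j, ConvexOn ℝ Set.univ (g j))
    (hgcont : ∀ j, Continuous (g j))
    (x dx : EuclideanSpace ℝ (Fin n)) (t : ℝ)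
    (hmin : ∀ d, Qmax f g x dx ≤ Qmax f g x d)
    (huniq : ∀ d, (∀ d', Qmax f g x d ≤ Qmax f g x d') → d = dx)
    (ht : t = Qmax f g x dx)
    (β : ℝ) (hβ0 : 0 < β) (hβ1 : β < 1) :
    (∀ α : ℝ, 0 < α → α ≤ 1 → α ≤ σ * (1 - β) / L → ∀ j,
      f j (x + α • dx) + g j (x + α • dx) ≤ f j x + g j x + β * α * t) ∧
    (∀ r : ℝ, 0 < r → r < 1 → ∃ k : ℕ,
      (∀ j, f j (x + r ^ k • dx) + g j (x + r ^ k • dx) ≤ f j x + g j x + β * r ^ k * t) ∧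
      min 1 (σ * (1 - β) * r / L) ≤ r ^ k) := by
  have hβ' : (0:ℝ) < 1 - β := by linarith
  have hQj0 : ∀ j : Fin (m+1), Qj f g j x 0 = 0 := by
    intro j; simp [Qj]
  have hQ0 : Qmax f g x 0 = 0 := by
    unfold Qmax
    rw [show (fun j => Qj f g j x 0) = fun _ : Fin (m+1) => (0:ℝ) from funext hQj0,
      Finset.sup'_const]
  have ht0 : t ≤ 0 := by rw [ht]; exact (hmin 0).trans_eq hQ0
  have main : ∀ α : ℝ, 0 < α → α ≤ 1 → α ≤ σ * (1 - β) / L → ∀ j,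
      f j (x + α • dx) + g j (x + α • dx) ≤ f j x + g j x + β * α * t := by
    intro α hα0 hα1 hαL j
    have hdiff : Differentiable ℝ (f j) := (hfC2 j).differentiable (by norm_num)
    have h1 := descent_lemma hL (f j) hdiff (hLip j) x (α • dx)
    rw [real_inner_smul_right, norm_smul, Real.norm_eq_abs, abs_of_pos hα0] at h1
    have h2 : g j (x + α • dx) ≤ g j x + α * (g j (x + dx) - g j x) := by
      have hc := (hgconv j).2 (Set.mem_univ (x + dx)) (Set.mem_univ x) hα0.le
        (by linarith : (0:ℝ) ≤ 1 - α) (by ring)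
      have he : α • (x + dx) + (1 - α) • x = x + α • dx := by module
      rw [he, smul_eq_mul, smul_eq_mul] at hc; linarith
    have h3 : σ * ‖dx‖ ^ 2 ≤ ⟪(fderiv ℝ (gradient (f j)) x) dx, dx⟫ :=
      hessian_lower (f j) (hfC2 j) (hfsc j) x dx
    have hq : Qj f g j x dx ≤ t := by
      rw [ht]; exact Finset.le_sup' (fun j => Qj f g j x dx) (Finset.mem_univ j)
    have hqdef : Qj f g j x dx = ⟪gradient (f j) x, dx⟫
        + (1 / 2) * ⟪(fderiv ℝ (gradient (f j)) x) dx, dx⟫ + g j (x + dx) - g j x := rfl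
    rw [hqdef] at hq
    have hαL' : α * L ≤ σ * (1 - β) := by
      rw [← le_div_iff₀ hL]; exact hαL
    set A := ⟪gradient (f j) x, dx⟫ with hA
    set Hd := ⟪(fderiv ℝ (gradient (f j)) x) dx, dx⟫ with hHd
    have hDnn : (0:ℝ) ≤ ‖dx‖ ^ 2 := sq_nonneg _
    have k1 : α * (A + 1/2 * Hd + (g j (x + dx) - g j x)) ≤ α * t := by
      apply mul_le_mul_of_nonneg_left _ hα0.le
      linarith
    have k2 : α * (σ * ‖dx‖ ^ 2) ≤ α * Hd := mul_le_mul_of_nonneg_left h3 hα0.le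
    have k3 : (1 - β) * (α * t) ≤ 0 :=
      mul_nonpos_iff.2 (Or.inl ⟨by linarith, mul_nonpos_iff.2 (Or.inl ⟨hα0.le, ht0⟩)⟩)
    have hαLσ : α * L ≤ σ := by nlinarith [mul_pos hσ hβ0]
    have k5 : α * L * (α * ‖dx‖ ^ 2) ≤ σ * (α * ‖dx‖ ^ 2) :=
      mul_le_mul_of_nonneg_right hαLσ (mul_nonneg hα0.le hDnn)
    nlinarith [h1, h2, k1, k2, k3, k5]
  constructor
  · exact main
  · intro r hr0 hr1
    have hc : 0 < σ * (1 - β) / L := div_pos (mul_pos hσ hβ') hL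
    have hex : ∃ k : ℕ, r ^ k ≤ σ * (1 - β) / L := by
      obtain ⟨k, hk⟩ := exists_pow_lt_of_lt_one hc hr1
      exact ⟨k, hk.le⟩
    refine ⟨Nat.find hex, ?_, ?_⟩
    · exact main _ (pow_pos hr0 _) (pow_le_one₀ hr0.le hr1.le) (Nat.find_spec hex)
    · rcases Nat.eq_zero_or_eq_succ_pred (Nat.find hex) with h0 | hsucc
      · rw [h0]; simpa using min_le_left (1:ℝ) (σ * (1 - β) * r / L)
      · set k := Nat.find hex with hkdef
        have hk' : ¬ (r ^ (k - 1) ≤ σ * (1 - β) / L) :=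
          Nat.find_min hex (by omega)
        push_neg at hk'
        have : σ * (1 - β) / L * r ≤ r ^ (k - 1) * r :=
          mul_le_mul_of_nonneg_right hk'.le hr0.le
        have hpow : r ^ (k - 1) * r = r ^ k := by
          rw [← pow_succ]
          congr 1
          omega
        calc min 1 (σ * (1 - β) * r / L) ≤ σ * (1 - β) * r / L := min_le_right _ _
          _ = σ * (1 - β) / L * r := by ring
          _ ≤ r ^ (k - 1) * r := this
          _ = r ^ k := hpow
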